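/- arXiv:1903.11378 — 6 statements merged into one kernel-verified Lean document; each statement's English description precedes it below -/
import Mathlib

section
/- If f ∈ C[-1,1] belongs to both the principal ideal generated by the identity function id(x) = x and the principal ideal generated by |id|(x) = |x| in the ring C[-1,1] of continuous real-valued functions on [-1,1], then f = g·id for some continuous g : [-1,1] → ℝ with g(0) = 0. -/
noncomputable section

abbrev X : Type := Set.Icc (-1:ℝ) 1

def idf : C(X, ℝ) := ⟨fun x => (x : ℝ), continuous_subtype_val⟩
def absf : C(X, ℝ) := ⟨fun x => |(x : ℝ)|, continuous_subtype_val.abs⟩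
def x0 : X := ⟨0, by norm_num⟩

theorem stmt0 (f : C(X, ℝ)) (h1 : ∃ a : C(X, ℝ), f = a * idf)
    (h2 : ∃ b : C(X, ℝ), f = b * absf) :
    ∃ g : C(X, ℝ), g x0 = 0 ∧ f = g * idf := by
  obtain ⟨a, ha⟩ := h1
  obtain ⟨b, hb⟩ := h2
  have key : ∀ x : X, a x * (x : ℝ) = b x * |(x : ℝ)| := by
    intro x
    have := congrArg (fun h : C(X, ℝ) => h x) (ha.symm.trans hb)
    simpa [idf, absf] using this
  have hpos : ∀ n : ℕ, (0:ℝ) < 1 / (n + 1) := by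
    intro n; positivity
  have hle : ∀ n : ℕ, (1:ℝ) / (n + 1) ≤ 1 := by
    intro n
    rw [div_le_one (by positivity)]
    linarith [Nat.cast_nonneg (α := ℝ) n]
  have hmem : ∀ n : ℕ, (1:ℝ) / (n + 1) ∈ Set.Icc (-1:ℝ) 1 := by
    intro n
    exact ⟨by linarith [hpos n], hle n⟩
  have hmem' : ∀ n : ℕ, -((1:ℝ) / (n + 1)) ∈ Set.Icc (-1:ℝ) 1 := by
    intro n
    constructor <;> [linarith [hle n]; linarith [hpos n]]
  set u : ℕ → X := fun n => ⟨1 / (n + 1), hmem n⟩ with hu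
  set v : ℕ → X := fun n => ⟨-(1 / (n + 1)), hmem' n⟩ with hv
  have htend0 : Filter.Tendsto (fun n : ℕ => (1:ℝ) / (n + 1)) Filter.atTop (nhds 0) :=
    tendsto_one_div_add_atTop_nhds_zero_nat
  have hut : Filter.Tendsto u Filter.atTop (nhds x0) := by
    rw [tendsto_subtype_rng]
    simpa [x0, hu] using htend0
  have hvt : Filter.Tendsto v Filter.atTop (nhds x0) := by
    rw [tendsto_subtype_rng]
    simpa [x0, hv] using htend0.neg
  have hau : ∀ n, a (u n) = b (u n) := by
    intro n
    have := key (u n)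
    have h0 := hpos n
    rw [show ((u n : X) : ℝ) = 1 / (n + 1) from rfl, abs_of_pos h0] at this
    exact mul_right_cancel₀ (ne_of_gt h0) this
  have hav : ∀ n, a (v n) = -b (v n) := by
    intro n
    have := key (v n)
    have h0 := hpos n
    rw [show ((v n : X) : ℝ) = -(1 / (n + 1)) from rfl, abs_neg, abs_of_pos h0] at this
    have : -(a (v n)) * (1 / (n + 1)) = b (v n) * (1 / (n + 1)) := by linarith
    have := mul_right_cancel₀ (ne_of_gt h0) this
    linarith
  have hca : Filter.Tendsto (fun n => a (u n)) Filter.atTop (nhds (a x0)) :=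
    (a.continuous.continuousAt.tendsto).comp hut
  have hcb : Filter.Tendsto (fun n => b (u n)) Filter.atTop (nhds (b x0)) :=
    (b.continuous.continuousAt.tendsto).comp hut
  have hca' : Filter.Tendsto (fun n => a (v n)) Filter.atTop (nhds (a x0)) :=
    (a.continuous.continuousAt.tendsto).comp hvt
  have h1' : a x0 = b x0 := by
    have : Filter.Tendsto (fun n => a (u n)) Filter.atTop (nhds (b x0)) := by
      simpa [hau] using hcb
    exact tendsto_nhds_unique hca this
  have h2' : a x0 = -b x0 := by
    have : Filter.Tendsto (fun n => a (v n)) Filter.atTop (nhds (-b x0)) := by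
      simpa [hav, Function.comp] using ((b.continuous.continuousAt.tendsto).comp hvt).neg
    exact tendsto_nhds_unique hca' this
  exact ⟨a, by linarith, ha⟩
end
end

section
/- If g : [-1,1] → ℝ is continuous with g(0) = 0, then the function f(x) = g(x)·x belongs to the intersection of the principal ideal generated by id(x) = x and the principal ideal generated by |id|(x) = |x| in C[-1,1]. -/
noncomputable section

theorem stmt1 (g : C(X, ℝ)) (hg : g x0 = 0) :
    (∃ a : C(X, ℝ), g * idf = a * idf) ∧ (∃ b : C(X, ℝ), g * idf = b * absf) := by
  constructor
  · exact ⟨g, rfl⟩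
  · refine ⟨⟨fun x => if ((x : ℝ) ≤ 0) then -g x else g x, ?_⟩, ?_⟩
    · apply Continuous.if_le (by fun_prop) (by fun_prop) continuous_subtype_val
        continuous_const
      intro x hx
      have hx0 : x = x0 := Subtype.ext hx
      simp [hx0, hg]
    · ext x
      simp only [ContinuousMap.mul_apply, ContinuousMap.coe_mk, idf, absf]
      rcases le_or_gt (x : ℝ) 0 with h | h
      · rw [if_pos h, abs_of_nonpos h]; ring
      · rw [if_neg (not_le.mpr h), abs_of_pos h]
end
end

section
/- The intersection of the principal ideals generated by id(x) = x and |id|(x) = |x| in C[-1,1] equals exactly the set {g·id : g ∈ C[-1,1], g(0) = 0}. -/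
noncomputable section

lemma umem (n : ℕ) : (1 / (n + 1 : ℝ)) ∈ Set.Icc (-1:ℝ) 1 := by
  constructor
  · have : (0:ℝ) < 1 / (n + 1 : ℝ) := by positivity
    linarith
  · rw [div_le_one (by positivity)]; linarith [Nat.cast_nonneg (α := ℝ) n]

lemma vmem (n : ℕ) : (-(1 / (n + 1 : ℝ))) ∈ Set.Icc (-1:ℝ) 1 := by
  have h := umem n
  constructor <;> [linarith [h.2]; linarith [h.1]]

theorem stmt2 :
    {f : C(X, ℝ) | (∃ a : C(X, ℝ), f = a * idf) ∧ (∃ b : C(X, ℝ), f = b * absf)} =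
      {f : C(X, ℝ) | ∃ g : C(X, ℝ), g x0 = 0 ∧ f = g * idf} := by
  ext f
  simp only [Set.mem_setOf_eq]
  constructor
  · rintro ⟨⟨a, ha⟩, ⟨b, hb⟩⟩
    refine ⟨a, ?_, ha⟩
    have hab : ∀ x : X, a x * (x : ℝ) = b x * |(x : ℝ)| := by
      intro x
      have := ContinuousMap.congr_fun (ha.symm.trans hb) x
      simpa [idf, absf] using this
    have hpos : ∀ x : X, 0 < (x : ℝ) → a x = b x := by
      intro x hx
      have h := hab x
      rw [abs_of_pos hx] at h
      exact mul_right_cancel₀ hx.ne' h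
    have hneg : ∀ x : X, (x : ℝ) < 0 → a x = -b x := by
      intro x hx
      have h := hab x
      rw [abs_of_neg hx] at h
      have : a x * (x : ℝ) = (-b x) * (x : ℝ) := by ring_nf; linarith [h]
      exact mul_right_cancel₀ hx.ne this
    -- sequences
    set u : ℕ → X := fun n => ⟨1 / (n + 1 : ℝ), umem n⟩ with hu
    set v : ℕ → X := fun n => ⟨-(1 / (n + 1 : ℝ)), vmem n⟩ with hv
    have hu0 : Filter.Tendsto u Filter.atTop (nhds x0) := by
      rw [hu, x0, tendsto_subtype_rng]
      exact tendsto_one_div_add_atTop_nhds_zero_nat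
    have hv0 : Filter.Tendsto v Filter.atTop (nhds x0) := by
      rw [hv, x0, tendsto_subtype_rng]
      simpa using (tendsto_one_div_add_atTop_nhds_zero_nat : Filter.Tendsto (fun n : ℕ => 1 / ((n : ℝ) + 1)) Filter.atTop (nhds 0)).neg
    have hupos : ∀ n, 0 < ((u n : X) : ℝ) := fun n => by positivity
    have hvneg : ∀ n, ((v n : X) : ℝ) < 0 := fun n => by
      simp only [hv]; have : (0:ℝ) < 1 / (n + 1 : ℝ) := by positivity
      simpa using this
    have h1 : a x0 = b x0 := by
      refine tendsto_nhds_unique ((a.continuous.tendsto x0).comp hu0) ?_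
      have : (fun n => a (u n)) = fun n => b (u n) := funext fun n => hpos _ (hupos n)
      rw [show (⇑a ∘ u) = fun n => a (u n) from rfl, this]
      exact (b.continuous.tendsto x0).comp hu0
    have h2 : a x0 = -b x0 := by
      refine tendsto_nhds_unique ((a.continuous.tendsto x0).comp hv0) ?_
      have : (fun n => a (v n)) = fun n => -b (v n) := funext fun n => hneg _ (hvneg n)
      rw [show (⇑a ∘ v) = fun n => a (v n) from rfl, this]
      exact ((b.continuous.tendsto x0).comp hv0).neg
    linarith
  · rintro ⟨g, hg0, hgf⟩
    refine ⟨⟨g, hgf⟩, ?_⟩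
    refine ⟨⟨fun x => if (0:ℝ) ≤ (x : ℝ) then g x else -g x, ?_⟩, ?_⟩
    · apply Continuous.if_le
      · exact g.continuous
      · exact g.continuous.neg
      · exact continuous_const
      · exact continuous_subtype_val
      · intro x hx
        have hxx : x = x0 := Subtype.ext hx.symm
        rw [hxx, hg0]; simp
    · rw [hgf]
      ext x
      simp only [ContinuousMap.mul_apply, ContinuousMap.coe_mk, idf, absf]
      rcases le_or_gt 0 (x : ℝ) with h | h
      · rw [if_pos h, abs_of_nonneg h]
      · rw [if_neg (not_le.mpr h), abs_of_neg h]; ring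
end
end

section
/- Let g₁, …, g_k ∈ C[-1,1] with g_i(0) = 0 for all i, and let a₁, …, a_k ∈ C[-1,1]. Then the equation max{√|g₁|, …, √|g_k|} + |id| = a₁g₁ + ⋯ + a_k g_k cannot hold on [-1,1]. -/
noncomputable section

theorem stmt4 (k : ℕ) (hk : 0 < k) (g a : Fin k → C(X, ℝ))
    (hg : ∀ i, g i x0 = 0) :
    ¬ ∀ x : X,
        (Finset.univ.sup' ⟨⟨0, hk⟩, Finset.mem_univ _⟩ fun i => Real.sqrt |g i x|)
            + |(x : ℝ)| = ∑ i, a i x * g i x := by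
  intro h
  have hne : (Finset.univ : Finset (Fin k)).Nonempty := ⟨⟨0, hk⟩, Finset.mem_univ _⟩
  set C : ℝ := ∑ i, ‖a i‖ with hC
  have hC0 : 0 ≤ C := Finset.sum_nonneg fun i _ => norm_nonneg _
  set ε : ℝ := 1 / (C + 1) with hεdef
  have hεpos : 0 < ε := by positivity
  set M : X → ℝ := fun x => Finset.univ.sup' hne fun i => |g i x| with hMdef
  have hMcont : ContinuousAt M x0 :=
    ContinuousAt.finset_sup'_apply hne fun i _ => ((g i).continuous.abs).continuousAt
  have hM0 : M x0 = 0 := by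
    apply le_antisymm
    · exact Finset.sup'_le _ _ fun i _ => by simp [hg i]
    · exact le_trans (abs_nonneg _) (Finset.le_sup' (fun i => |g i x0|) (Finset.mem_univ (⟨0, hk⟩ : Fin k)))
  obtain ⟨δ, hδpos, hδ⟩ := Metric.continuousAt_iff.mp hMcont (ε ^ 2) (by positivity)
  set t : ℝ := min (δ / 2) (1 / 2) with htdef
  have htpos : 0 < t := by positivity
  have ht1 : t ≤ 1 := le_trans (min_le_right _ _) (by norm_num)
  set x : X := ⟨t, ⟨by linarith, ht1⟩⟩ with hxdef
  have hdist : dist x x0 < δ := by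
    rw [Subtype.dist_eq]
    simp only [x0, hxdef]
    rw [Real.dist_eq]
    have : |t - 0| = t := by rw [sub_zero, abs_of_pos htpos]
    rw [this]
    exact lt_of_le_of_lt (min_le_left _ _) (by linarith)
  have hMx : M x < ε ^ 2 := by
    have := hδ hdist
    rw [hM0, Real.dist_eq, sub_zero] at this
    exact lt_of_le_of_lt (le_abs_self _) this
  have hMnonneg : 0 ≤ M x :=
    le_trans (abs_nonneg _) (Finset.le_sup' (fun i => |g i x|) (Finset.mem_univ (⟨0, hk⟩ : Fin k)))
  -- sqrt bound
  have hsqrtM : Real.sqrt (M x) ≤ Finset.univ.sup' hne fun i => Real.sqrt |g i x| := by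
    obtain ⟨i, _, hi⟩ := Finset.exists_mem_eq_sup' hne fun i => |g i x|
    have : M x = |g i x| := hi
    rw [this]
    exact Finset.le_sup' (fun j => Real.sqrt |g j x|) (Finset.mem_univ i)
  -- RHS bound
  have hRHS : (∑ i, a i x * g i x) ≤ C * M x := by
    rw [hC, Finset.sum_mul]
    apply Finset.sum_le_sum
    intro i _
    calc a i x * g i x ≤ |a i x * g i x| := le_abs_self _
      _ = |a i x| * |g i x| := abs_mul _ _
      _ ≤ ‖a i‖ * M x := by
          apply mul_le_mul ((a i).norm_coe_le_norm x)
            (Finset.le_sup' _ (Finset.mem_univ i)) (abs_nonneg _) (norm_nonneg _)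
  have heq := h x
  have habs : |(x : ℝ)| = t := by
    simp only [hxdef]
    exact abs_of_pos htpos
  rw [habs] at heq
  have hkey : Real.sqrt (M x) + t ≤ C * M x := by
    calc Real.sqrt (M x) + t
        ≤ (Finset.univ.sup' hne fun i => Real.sqrt |g i x|) + t := by linarith
      _ = ∑ i, a i x * g i x := heq
      _ ≤ C * M x := hRHS
  have hsqle : Real.sqrt (M x) ≤ ε := by
    have := Real.sqrt_le_sqrt hMx.le
    rwa [Real.sqrt_sq hεpos.le] at this
  have hsqnn : 0 ≤ Real.sqrt (M x) := Real.sqrt_nonneg _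
  have hMsq : M x = Real.sqrt (M x) * Real.sqrt (M x) := (Real.mul_self_sqrt hMnonneg).symm
  -- C * M x ≤ C * ε * sqrt(M x) ≤ sqrt(M x)
  have hCε : C * ε ≤ 1 := by
    rw [hεdef]
    rw [div_eq_mul_inv, one_mul, ← div_eq_mul_inv, div_le_one (by linarith)]
    linarith
  nlinarith [mul_le_mul_of_nonneg_left hsqle hC0, mul_nonneg hC0 hsqnn]
end
end

section
/- The ideal I = Ideal(id) ∩ Ideal(|id|) in the ring C[-1,1] is not finitely generated: there is no finite set f₁, …, f_k ∈ C[-1,1] such that I = {a₁f₁ + ⋯ + a_k f_k : a_i ∈ C[-1,1]}. -/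
noncomputable section

def u (n : ℕ) : X := ⟨1/(n+1), by
  constructor
  · have : (0:ℝ) < 1/(n+1) := by positivity
    linarith
  · rw [div_le_one (by positivity)]
    have := Nat.cast_nonneg (α := ℝ) n
    linarith⟩

def v (n : ℕ) : X := ⟨-(1/(n+1)), by
  constructor
  · rw [neg_le, neg_neg, div_le_one (by positivity)]
    have := Nat.cast_nonneg (α := ℝ) n
    linarith
  · have : (0:ℝ) < 1/(n+1) := by positivity
    linarith⟩

lemma u_pos (n : ℕ) : (0:ℝ) < (u n : ℝ) := by
  show (0:ℝ) < 1/(n+1); positivity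

lemma v_neg (n : ℕ) : ((v n : ℝ)) < 0 := by
  show -(1/((n:ℝ)+1)) < 0
  have : (0:ℝ) < 1/(n+1) := by positivity
  linarith

lemma u_tendsto : Filter.Tendsto u Filter.atTop (nhds x0) := by
  rw [tendsto_subtype_rng]
  exact tendsto_one_div_add_atTop_nhds_zero_nat

lemma v_tendsto : Filter.Tendsto v Filter.atTop (nhds x0) := by
  rw [tendsto_subtype_rng]
  have := (tendsto_one_div_add_atTop_nhds_zero_nat :
    Filter.Tendsto (fun n : ℕ => 1 / ((n : ℝ) + 1)) Filter.atTop (nhds 0)).neg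
  rwa [neg_zero] at this

lemma keyA (a b : C(X, ℝ)) (hab : a * idf = b * absf) : a x0 = 0 := by
  have hpt : ∀ x : X, a x * (x : ℝ) = b x * |(x : ℝ)| := by
    intro x
    have := ContinuousMap.congr_fun hab x
    simpa [idf, absf] using this
  have h1 : ∀ n, a (u n) = b (u n) := by
    intro n
    have := hpt (u n)
    rw [abs_of_pos (u_pos n)] at this
    exact mul_right_cancel₀ (ne_of_gt (u_pos n)) this
  have h2 : ∀ n, a (v n) = - b (v n) := by
    intro n
    have := hpt (v n)
    rw [abs_of_neg (v_neg n)] at this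
    have h' : a (v n) * (v n : ℝ) = (- b (v n)) * (v n : ℝ) := by linarith [this]
    exact mul_right_cancel₀ (ne_of_lt (v_neg n)) h'
  have ta : Filter.Tendsto (fun n => a (u n)) Filter.atTop (nhds (a x0)) :=
    (a.continuous.tendsto x0).comp u_tendsto
  have tb : Filter.Tendsto (fun n => b (u n)) Filter.atTop (nhds (b x0)) :=
    (b.continuous.tendsto x0).comp u_tendsto
  have ta' : Filter.Tendsto (fun n => a (v n)) Filter.atTop (nhds (a x0)) :=
    (a.continuous.tendsto x0).comp v_tendsto
  have tb' : Filter.Tendsto (fun n => b (v n)) Filter.atTop (nhds (b x0)) :=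
    (b.continuous.tendsto x0).comp v_tendsto
  have e1 : a x0 = b x0 := tendsto_nhds_unique (ta.congr h1) tb
  have e2 : a x0 = - b x0 := tendsto_nhds_unique (ta'.congr h2) tb'.neg
  linarith

theorem stmt5 :
    ¬ ∃ (k : ℕ) (f : Fin k → C(X, ℝ)),
        {h : C(X, ℝ) | (∃ a : C(X, ℝ), h = a * idf) ∧ (∃ b : C(X, ℝ), h = b * absf)} =
          {h : C(X, ℝ) | ∃ a : Fin k → C(X, ℝ), h = ∑ i, a i * f i} := by
  rintro ⟨k, f, hEq⟩
  -- each generator lies in the ideal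
  have hf : ∀ i, f i ∈ {h : C(X, ℝ) | (∃ a : C(X, ℝ), h = a * idf) ∧ (∃ b : C(X, ℝ), h = b * absf)} := by
    intro i
    rw [hEq]
    exact ⟨fun j => if j = i then 1 else 0, by simp⟩
  choose a ha using fun i => (hf i).1
  choose b hb using fun i => (hf i).2
  have ha0 : ∀ i, a i x0 = 0 := fun i => keyA (a i) (b i) ((ha i).symm.trans (hb i))
  -- construct the witness function
  set s : C(X, ℝ) := ⟨fun x => ∑ i, |a i x|, by
    apply continuous_finset_sum
    exact fun i _ => (a i).continuous.abs⟩ with hs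
  have s_nonneg : ∀ x : X, 0 ≤ s x := by
    intro x
    show (0:ℝ) ≤ ∑ i, |a i x|
    exact Finset.sum_nonneg fun i _ => abs_nonneg _
  set g : C(X, ℝ) := ⟨fun x => Real.sqrt (s x + |(x : ℝ)|), by
    exact Real.continuous_sqrt.comp (s.continuous.add continuous_subtype_val.abs)⟩ with hg
  have g_nonneg : ∀ x : X, 0 ≤ g x := fun x => Real.sqrt_nonneg _
  have g_sq : ∀ x : X, g x ^ 2 = s x + |(x : ℝ)| := by
    intro x
    show Real.sqrt (s x + |(x : ℝ)|) ^ 2 = s x + |(x : ℝ)|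
    exact Real.sq_sqrt (by have := s_nonneg x; positivity)
  have g_pos : ∀ x : X, (x : ℝ) ≠ 0 → 0 < g x := by
    intro x hx
    show 0 < Real.sqrt (s x + |(x : ℝ)|)
    apply Real.sqrt_pos.2
    have : 0 < |(x : ℝ)| := abs_pos.2 hx
    linarith [s_nonneg x]
  have gx0 : g x0 = 0 := by
    show Real.sqrt (s x0 + |((x0 : X) : ℝ)|) = 0
    have h1 : s x0 = 0 := by
      show (∑ i, |a i x0|) = 0
      simp [ha0]
    have h2 : ((x0 : X) : ℝ) = 0 := rfl
    rw [h1, h2]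
    simp
  classical
  have frontier_sub : frontier {x : X | (x : ℝ) < 0} ⊆ {x : X | (x : ℝ) = 0} := by
    intro x hx
    have h1 : x ∈ closure {x : X | (x : ℝ) < 0} := hx.1
    have h2 : x ∉ interior {x : X | (x : ℝ) < 0} := hx.2
    have hle : (x : ℝ) ≤ 0 := by
      have : x ∈ {x : X | (x : ℝ) ≤ 0} :=
        closure_minimal (fun y hy => le_of_lt hy)
          (isClosed_le continuous_subtype_val continuous_const) h1
      exact this
    have hopen : IsOpen {x : X | (x : ℝ) < 0} :=
      isOpen_lt continuous_subtype_val continuous_const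
    have hnot : ¬ (x : ℝ) < 0 := by
      intro hlt
      exact h2 (by rwa [hopen.interior_eq])
    exact le_antisymm hle (not_lt.1 hnot)
  have gzero_on_zero : ∀ x : X, (x : ℝ) = 0 → g x = 0 := by
    intro x hx
    have hx0 : x = x0 := Subtype.ext hx
    rw [hx0]; exact gx0
  set bb : C(X, ℝ) := ⟨fun x => if (x : ℝ) < 0 then -(g x) else g x, by
    apply Continuous.if
    · intro x hx
      have := gzero_on_zero x (frontier_sub hx)
      simp [this]
    · exact g.continuous.neg
    · exact g.continuous⟩ with hbb
  set h : C(X, ℝ) := idf * g with hh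
  have hmem : h ∈ {h : C(X, ℝ) | (∃ a : C(X, ℝ), h = a * idf) ∧ (∃ b : C(X, ℝ), h = b * absf)} := by
    constructor
    · exact ⟨g, mul_comm idf g⟩
    · refine ⟨bb, ?_⟩
      ext x
      show (x : ℝ) * g x = (if (x : ℝ) < 0 then -(g x) else g x) * |(x : ℝ)|
      by_cases hx : (x : ℝ) < 0
      · rw [if_pos hx, abs_of_neg hx]; ring
      · rw [if_neg hx, abs_of_nonneg (not_lt.1 hx)]; ring
  rw [hEq] at hmem
  obtain ⟨c, hc⟩ := hmem
  set M : ℝ := ∑ i, ‖c i‖ with hM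
  have hMle : ∀ i (x : X), |c i x| ≤ M := by
    intro i x
    calc |c i x| ≤ ‖c i‖ := by
          have := (c i).norm_coe_le_norm x
          rwa [Real.norm_eq_abs] at this
      _ ≤ M := Finset.single_le_sum (fun j _ => norm_nonneg (c j)) (Finset.mem_univ i)
  have key : ∀ x : X, (x : ℝ) ≠ 0 → 1 ≤ M * g x := by
    intro x hx
    have hcx : (x : ℝ) * g x = (∑ i, c i x * a i x) * (x : ℝ) := by
      have := ContinuousMap.congr_fun hc x
      simp only [hh, ContinuousMap.mul_apply, ContinuousMap.sum_apply] at this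
      rw [Finset.sum_mul]
      rw [show (idf x * g x : ℝ) = (x : ℝ) * g x from rfl] at this
      rw [this]
      apply Finset.sum_congr rfl
      intro i _
      have hai := ContinuousMap.congr_fun (ha i) x
      rw [hai]
      show c i x * (a i x * idf x) = c i x * a i x * idf x
      ring
    have hgx : g x = ∑ i, c i x * a i x := by
      have := hcx
      have h' : g x * (x : ℝ) = (∑ i, c i x * a i x) * (x : ℝ) := by linarith [this]
      exact mul_right_cancel₀ hx h'
    have hbound : g x ≤ M * s x := by
      rw [hgx]
      calc (∑ i, c i x * a i x) ≤ ∑ i, |c i x * a i x| :=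
            Finset.sum_le_sum fun i _ => le_abs_self _
        _ ≤ ∑ i, M * |a i x| := by
            apply Finset.sum_le_sum
            intro i _
            rw [abs_mul]
            exact mul_le_mul_of_nonneg_right (hMle i x) (abs_nonneg _)
        _ = M * s x := by rw [← Finset.mul_sum]; rfl
    have hsg : s x ≤ g x ^ 2 := by
      have := g_sq x
      have := abs_nonneg (x : ℝ)
      linarith [g_sq x]
    have hgpos := g_pos x hx
    have hM0 : (0:ℝ) ≤ M := Finset.sum_nonneg fun i _ => norm_nonneg _
    nlinarith [hbound, hsg, hgpos, mul_le_mul_of_nonneg_left hsg hM0]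
  have hev : ∀ n, (1 : ℝ) ≤ M * g (u n) := fun n => key (u n) (ne_of_gt (u_pos n))
  have hlim : Filter.Tendsto (fun n => M * g (u n)) Filter.atTop (nhds (M * g x0)) :=
    (tendsto_const_nhds.mul ((g.continuous.tendsto x0).comp u_tendsto))
  have : (1 : ℝ) ≤ M * g x0 :=
    ge_of_tendsto hlim (Filter.Eventually.of_forall hev)
  rw [gx0] at this
  linarith
end
end

section
/- In the ring C[-1,1], the element |id| (the function x ↦ |x|) divides g·id (where g ∈ C[-1,1], g(0) = 0): i.e., there exists g₁ ∈ C[-1,1] with g₁·|id| = g·id. -/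
noncomputable section

theorem stmt13 (g : C(X, ℝ)) (hg : g x0 = 0) :
    ∃ g₁ : C(X, ℝ), g₁ * absf = g * idf := by
  have hcont : Continuous fun x : X => if (0:ℝ) ≤ (x:ℝ) then g x else -(g x) := by
    apply Continuous.if_le g.continuous g.continuous.neg continuous_const
      continuous_subtype_val
    intro x hx
    have hx0 : x = x0 := Subtype.ext hx.symm
    simp [hx0, hg]
  refine ⟨⟨_, hcont⟩, ?_⟩
  ext x
  simp only [ContinuousMap.mul_apply, ContinuousMap.coe_mk, absf, idf]
  by_cases h : (0:ℝ) ≤ (x:ℝ)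
  · simp [h, abs_of_nonneg h]
  · simp only [h, if_false]
    rw [abs_of_neg (lt_of_not_ge h)]
    ring
end
end
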